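/- Fix a > 1 and λ ∈ (0,1), let (X_i)_{i≥1} be independent, identically distributed positive random variables with 0 < E[X_1] and E[X_1²] < ∞, and let A′ be the reordered on/off process built from (X_i) with cycle endpoints T_N = (a/λ)·Σ_{i=1}^N X_i and queue Q(t) = sup_{0≤s≤t} ∫_s^t (A′(u) − 1) du. Then almost surely (1/T_N) ∫_0^{T_N} Q(t) dt → λ(a−1)·E[X_1²]/(2·E[X_1]) as N → ∞; in particular the long-run mean queue length of the reordered process is finite exactly when E[X_1²] is finite. -/

import Mathlib

open MeasureTheory ProbabilityTheory Filter Finset Set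

lemma stmt7_ae_uIoc {f : ℝ → ℝ} {c s t : ℝ} (hst : s ≤ t)
    (h : Set.EqOn f (fun _ => c) (Set.Ico s t)) :
    ∀ᵐ v ∂(volume : Measure ℝ), v ∈ Set.uIoc s t → f v = c := by
  have h1 : ∀ᵐ v ∂(volume : Measure ℝ), v ≠ t := by
    rw [ae_iff]; simpa using (by simp : (volume : Measure ℝ) {t} = 0)
  filter_upwards [h1] with v hv hmem
  rw [Set.uIoc_of_le hst] at hmem
  exact h ⟨hmem.1.le, lt_of_le_of_ne hmem.2 hv⟩

lemma stmt7_intInt {f : ℝ → ℝ} {c s t : ℝ} (hst : s ≤ t)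
    (h : Set.EqOn f (fun _ => c) (Set.Ico s t)) :
    IntervalIntegrable f volume s t := by
  refine (intervalIntegrable_const (c := c)).congr_ae ?_
  rw [Filter.EventuallyEq, ae_restrict_iff' measurableSet_uIoc]
  filter_upwards [stmt7_ae_uIoc hst h] with v hv hm
  exact (hv hm).symm

lemma stmt7_integral {f : ℝ → ℝ} {c s t : ℝ} (hst : s ≤ t)
    (h : Set.EqOn f (fun _ => c) (Set.Ico s t)) :
    ∫ v in s..t, f v = c * (t - s) := by
  rw [intervalIntegral.integral_congr_ae (stmt7_ae_uIoc hst h)]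
  simp [mul_comm]

section Det
variable {a lam : ℝ} {x : ℕ → ℝ} {T : ℕ → ℝ} {A : ℝ → ℝ} {Q : ℝ → ℝ}

lemma stmt7_det (ha : 1 < a) (hl0 : 0 < lam) (hl1 : lam < 1)
    (hx : ∀ i, 0 < x i)
    (hT : ∀ N, T N = (a / lam) * ∑ i ∈ Finset.range N, x i)
    (hAon : ∀ i t, T i ≤ t → t < T i + x i → A t = a)
    (hAoff : ∀ i t, T i + x i ≤ t → t < T (i + 1) → A t = 0)
    (hQ : ∀ t, Q t = ⨆ u : Set.Icc (0:ℝ) t, ∫ v in (u : ℝ)..t, (A v - 1))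
    {mu m2 : ℝ} (hmu : 0 < mu)
    (h1 : Tendsto (fun n : ℕ => (n : ℝ)⁻¹ * ∑ i ∈ Finset.range n, x i) atTop (nhds mu))
    (h2 : Tendsto (fun n : ℕ => (n : ℝ)⁻¹ * ∑ i ∈ Finset.range n, x i ^ 2) atTop (nhds m2)) :
    Tendsto (fun N => (1 / T N) * ∫ t in (0:ℝ)..(T N), Q t) atTop
      (nhds (lam * (a - 1) * m2 / (2 * mu))) := by
  have ha0 : (0:ℝ) < a := lt_trans one_pos ha
  have hal : a < a / lam := by
    rw [lt_div_iff₀ hl0]; nlinarith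
  have hal1 : 1 < a / lam := lt_trans ha hal
  -- basic structure
  have hT0 : T 0 = 0 := by simp [hT]
  have hTs : ∀ i, T (i + 1) = T i + (a / lam) * x i := by
    intro i; simp [hT, Finset.sum_range_succ, mul_add]
  have hp01 : ∀ i, T i < T i + x i := fun i => by nlinarith [hx i]
  have hp12 : ∀ i, T i + x i < T i + a * x i := fun i => by nlinarith [hx i]
  have hp23 : ∀ i, T i + a * x i < T (i + 1) := fun i => by
    rw [hTs i]; nlinarith [hx i]
  have hp13 : ∀ i, T i + x i < T (i+1) := fun i => lt_trans (hp12 i) (hp23 i)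
  have hp03 : ∀ i, T i < T (i+1) := fun i => lt_trans (hp01 i) (hp13 i)
  have hTmono : StrictMono T := strictMono_nat_of_lt_succ hp03
  have hTnn : ∀ i, 0 ≤ T i := fun i => by
    rw [← hT0]; exact hTmono.monotone (Nat.zero_le i)
  -- A on pieces
  have Eon : ∀ i, Set.EqOn (fun v => A v - 1) (fun _ => a - 1) (Set.Ico (T i) (T i + x i)) := by
    intro i v hv; simp only; rw [hAon i v hv.1 hv.2]
  have Eoff : ∀ i, Set.EqOn (fun v => A v - 1) (fun _ => -1) (Set.Ico (T i + x i) (T (i+1))) := by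
    intro i v hv; simp only; rw [hAoff i v hv.1 hv.2]; ring
  -- integrability of A-1 on cycles
  have ion : ∀ i, IntervalIntegrable (fun v => A v - 1) volume (T i) (T i + x i) :=
    fun i => stmt7_intInt (hp01 i).le (Eon i)
  have ioff : ∀ i, IntervalIntegrable (fun v => A v - 1) volume (T i + x i) (T (i+1)) :=
    fun i => stmt7_intInt (hp13 i).le (Eoff i)
  have icyc : ∀ i, IntervalIntegrable (fun v => A v - 1) volume (T i) (T (i+1)) :=
    fun i => (ion i).trans (ioff i)
  have i0 : ∀ N, IntervalIntegrable (fun v => A v - 1) volume 0 (T N) := by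
    intro N; induction N with
    | zero => rw [hT0]
    | succ n ih => exact ih.trans (icyc n)
  have igen : ∀ N u t, u ∈ Set.Icc 0 (T N) → t ∈ Set.Icc 0 (T N) →
      IntervalIntegrable (fun v => A v - 1) volume u t := by
    intro N u t hu ht
    refine (i0 N).mono_set ?_
    rw [Set.uIcc_of_le (hTnn N)]
    exact Set.uIcc_subset_Icc hu ht
  -- F and piece integral values
  set F : ℝ → ℝ := fun t => ∫ v in (0:ℝ)..t, (A v - 1) with hF
  have Fsub : ∀ N u t, u ∈ Set.Icc 0 (T N) → t ∈ Set.Icc 0 (T N) →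
      (∫ v in u..t, (A v - 1)) = F t - F u := by
    intro N u t hu ht
    rw [hF]
    exact (intervalIntegral.integral_interval_sub_left
      (igen N 0 t (Set.left_mem_Icc.2 (hTnn N)) ht)
      (igen N 0 u (Set.left_mem_Icc.2 (hTnn N)) hu)).symm
  have von : ∀ i s t, T i ≤ s → s ≤ t → t ≤ T i + x i →
      (∫ v in s..t, (A v - 1)) = (a - 1) * (t - s) := by
    intro i s t h1 h2 h3
    exact stmt7_integral h2 (fun v hv => Eon i ⟨le_trans h1 hv.1, lt_of_lt_of_le hv.2 h3⟩)
  have voff : ∀ i s t, T i + x i ≤ s → s ≤ t → t ≤ T (i+1) →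
      (∫ v in s..t, (A v - 1)) = -(t - s) := by
    intro i s t h1 h2 h3
    have := stmt7_integral h2 (fun v hv => Eoff i ⟨le_trans h1 hv.1, lt_of_lt_of_le hv.2 h3⟩)
    rw [this]; ring
  -- F difference within cycle
  have Fdiff : ∀ i t, T i ≤ t → t ≤ T (i+1) → F t - F (T i) =
      if t ≤ T i + x i then (a-1)*(t - T i) else (a-1)*(x i) - (t - (T i + x i)) := by
    intro i t h1 h2
    have hmem : ∀ s, T i ≤ s → s ≤ T (i+1) → s ∈ Set.Icc 0 (T (i+1)) :=
      fun s hs1 hs2 => ⟨le_trans (hTnn i) hs1, hs2⟩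
    rw [← Fsub (i+1) (T i) t (hmem _ le_rfl (hp03 i).le) (hmem _ h1 h2)]
    split_ifs with hc
    · exact von i (T i) t le_rfl h1 hc
    · push_neg at hc
      have imid : IntervalIntegrable (fun v => A v - 1) volume (T i + x i) t :=
        (ioff i).mono_set (Set.uIcc_subset_uIcc_left
          (by rw [Set.mem_uIcc]; left; exact ⟨hc.le, h2⟩))
      rw [← intervalIntegral.integral_add_adjacent_intervals (ion i) imid]
      rw [von i (T i) (T i + x i) le_rfl (hp01 i).le le_rfl,
          voff i (T i + x i) t le_rfl hc.le h2]
      ring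
  -- F at cycle endpoints decreases
  have FTstep : ∀ i, F (T (i+1)) = F (T i) + (a - a/lam) * x i := by
    intro i
    have := Fdiff i (T (i+1)) (hp03 i).le le_rfl
    rw [if_neg (not_le.2 (hp13 i))] at this
    rw [hTs i] at this ⊢
    nlinarith [this]
  have FTmono : ∀ j i, j ≤ i → F (T i) ≤ F (T j) := by
    intro j i hji
    induction i with
    | zero => rw [Nat.le_zero.1 hji]
    | succ n ih =>
      rcases Nat.lt_or_ge j (n+1) with h | h
      · have := ih (Nat.lt_succ_iff.1 h)
        rw [FTstep n]
        nlinarith [hx n, hal]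
      · have : j = n + 1 := le_antisymm hji h
        rw [this]
  -- F within a cycle is at least F at the right endpoint
  have Fcyc : ∀ i u, T i ≤ u → u ≤ T (i+1) → F (T (i+1)) ≤ F u := by
    intro i u hu1 hu2
    have hd := Fdiff i u hu1 hu2
    have hd2 := FTstep i
    split_ifs at hd with hc
    · nlinarith [hx i, hal, hu1]
    · push_neg at hc
      rw [hTs i] at hu2
      nlinarith [hx i]
  -- F (T i) is minimal on [0, T i]
  have Flow : ∀ i u, 0 ≤ u → u ≤ T i → F (T i) ≤ F u := by
    intro i
    induction i with
    | zero => intro u h1 h2; rw [hT0] at h2; have : u = 0 := le_antisymm h2 h1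
              rw [this, ← hT0]
    | succ n ih =>
      intro u h1 h2
      rcases le_or_gt u (T n) with h | h
      · exact le_trans (FTmono n (n+1) (Nat.le_succ n)) (ih u h1 h)
      · exact Fcyc n u h.le h2
  -- key lower bound for F on [0, t]
  have Fkey : ∀ i t u, T i ≤ t → t ≤ T (i+1) → 0 ≤ u → u ≤ t →
      min (F (T i)) (F t) ≤ F u := by
    intro i t u ht1 ht2 hu1 hu2
    rcases le_or_gt u (T i) with h | h
    · exact le_trans (min_le_left _ _) (Flow i u hu1 h)
    · have hu3 : T i ≤ u := h.le
      have hu4 : u ≤ T (i+1) := le_trans hu2 ht2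
      have hdu := Fdiff i u hu3 hu4
      have hdt := Fdiff i t ht1 ht2
      rcases le_or_gt t (T i + x i) with hc | hc
      · rw [if_pos (le_trans hu2 hc)] at hdu
        refine le_trans (min_le_left _ _) ?_
        nlinarith
      · rw [if_neg (not_le.2 hc)] at hdt
        rcases le_or_gt u (T i + x i) with hc2 | hc2
        · rw [if_pos hc2] at hdu
          refine le_trans (min_le_left _ _) ?_
          nlinarith
        · rw [if_neg (not_le.2 hc2)] at hdu
          refine le_trans (min_le_right _ _) ?_
          nlinarith
  -- formula for Q
  have Qform : ∀ i t, T i ≤ t → t ≤ T (i+1) → Q t = max (F t - F (T i)) 0 := by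
    intro i t ht1 ht2
    have ht0 : (0:ℝ) ≤ t := le_trans (hTnn i) ht1
    have hne : Nonempty (Set.Icc (0:ℝ) t) := ⟨⟨0, Set.left_mem_Icc.2 ht0⟩⟩
    have hval : ∀ u : Set.Icc (0:ℝ) t, (∫ v in (u:ℝ)..t, (A v - 1)) = F t - F u := by
      intro u
      exact Fsub (i+1) u t ⟨u.2.1, le_trans u.2.2 ht2⟩ ⟨ht0, ht2⟩
    have hub : ∀ u : Set.Icc (0:ℝ) t, (∫ v in (u:ℝ)..t, (A v - 1)) ≤ max (F t - F (T i)) 0 := by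
      intro u
      rw [hval u]
      have := Fkey i t u ht1 ht2 u.2.1 u.2.2
      rcases le_total (F (T i)) (F t) with h | h
      · rw [min_eq_left h] at this
        exact le_trans (by linarith) (le_max_left _ _)
      · rw [min_eq_right h] at this
        exact le_trans (by linarith) (le_max_right _ _)
    have hbdd : BddAbove (Set.range fun u : Set.Icc (0:ℝ) t => ∫ v in (u:ℝ)..t, (A v - 1)) := by
      refine ⟨max (F t - F (T i)) 0, ?_⟩
      rintro y ⟨u, rfl⟩; exact hub u
    rw [hQ t]
    refine le_antisymm (ciSup_le hub) (max_le ?_ ?_)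
    · have := le_ciSup hbdd (⟨T i, ⟨hTnn i, ht1⟩⟩ : Set.Icc (0:ℝ) t)
      rwa [hval] at this
    · have := le_ciSup hbdd (⟨t, Set.right_mem_Icc.2 ht0⟩ : Set.Icc (0:ℝ) t)
      rw [hval] at this
      simpa using this
  -- explicit Q on pieces
  have Qon : ∀ i t, T i ≤ t → t ≤ T i + x i → Q t = (a-1) * (t - T i) := by
    intro i t h1 h2
    have h3 : t ≤ T (i+1) := le_trans h2 (hp13 i).le
    rw [Qform i t h1 h3]
    have hd := Fdiff i t h1 h3
    rw [if_pos h2] at hd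
    rw [hd, max_eq_left (by nlinarith)]
  have Qoff1 : ∀ i t, T i + x i ≤ t → t ≤ T i + a * x i → Q t = T i + a * x i - t := by
    intro i t h1 h2
    have h0 : T i ≤ t := le_trans (hp01 i).le h1
    have h3 : t ≤ T (i+1) := le_trans h2 (hp23 i).le
    rw [Qform i t h0 h3]
    have hd := Fdiff i t h0 h3
    split_ifs at hd with hc
    · have : t = T i + x i := le_antisymm hc h1
      rw [hd, this, max_eq_left (by nlinarith [hx i])]
      ring
    · rw [hd, max_eq_left (by nlinarith)]
      ring
  have Qoff2 : ∀ i t, T i + a * x i ≤ t → t ≤ T (i+1) → Q t = 0 := by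
    intro i t h1 h2
    have h0' : T i ≤ t := le_trans ((hp01 i).trans (hp12 i)).le h1
    rw [Qform i t h0' h2]
    have hd := Fdiff i t h0' h2
    have hxi := hx i
    split_ifs at hd with hc
    · exfalso; nlinarith
    · rw [hd, max_eq_right (by nlinarith)]
  -- integrate Q over a cycle
  have IntQ1 : ∀ i, IntervalIntegrable Q volume (T i) (T i + x i) := by
    intro i
    refine IntervalIntegrable.congr_ae (f := fun t => (a-1) * (t - T i)) ?_ ?_
    · exact ((continuous_const.mul (continuous_id.sub continuous_const))).intervalIntegrable _ _
    · refine (ae_restrict_mem measurableSet_uIoc).mono fun v hv => ?_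
      have hv2 := Set.uIoc_subset_uIcc hv
      rw [Set.uIcc_of_le (hp01 i).le] at hv2
      exact (Qon i v hv2.1 hv2.2).symm
  have IntQ2 : ∀ i, IntervalIntegrable Q volume (T i + x i) (T i + a * x i) := by
    intro i
    refine IntervalIntegrable.congr_ae (f := fun t => T i + a * x i - t) ?_ ?_
    · exact (continuous_const.sub continuous_id).intervalIntegrable _ _
    · refine (ae_restrict_mem measurableSet_uIoc).mono fun v hv => ?_
      have hv2 := Set.uIoc_subset_uIcc hv
      rw [Set.uIcc_of_le (hp12 i).le] at hv2
      exact (Qoff1 i v hv2.1 hv2.2).symm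
  have IntQ3 : ∀ i, IntervalIntegrable Q volume (T i + a * x i) (T (i+1)) := by
    intro i
    refine IntervalIntegrable.congr_ae (f := fun _ => (0:ℝ)) intervalIntegrable_const ?_
    refine (ae_restrict_mem measurableSet_uIoc).mono fun v hv => ?_
    have hv2 := Set.uIoc_subset_uIcc hv
    rw [Set.uIcc_of_le (hp23 i).le] at hv2
    exact (Qoff2 i v hv2.1 hv2.2).symm
  have IntQcyc : ∀ i, IntervalIntegrable Q volume (T i) (T (i+1)) :=
    fun i => ((IntQ1 i).trans (IntQ2 i)).trans (IntQ3 i)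
  have Icyc : ∀ i, (∫ t in (T i)..(T (i+1)), Q t) = a * (a-1) / 2 * x i ^ 2 := by
    intro i
    rw [← intervalIntegral.integral_add_adjacent_intervals ((IntQ1 i).trans (IntQ2 i)) (IntQ3 i),
        ← intervalIntegral.integral_add_adjacent_intervals (IntQ1 i) (IntQ2 i)]
    have e1 : (∫ t in (T i)..(T i + x i), Q t) = ∫ t in (T i)..(T i + x i), (a-1) * (t - T i) := by
      refine intervalIntegral.integral_congr fun v hv => ?_
      rw [Set.uIcc_of_le (hp01 i).le] at hv
      exact Qon i v hv.1 hv.2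
    have e2 : (∫ t in (T i + x i)..(T i + a * x i), Q t)
        = ∫ t in (T i + x i)..(T i + a * x i), (T i + a * x i - t) := by
      refine intervalIntegral.integral_congr fun v hv => ?_
      rw [Set.uIcc_of_le (hp12 i).le] at hv
      exact Qoff1 i v hv.1 hv.2
    have e3 : (∫ t in (T i + a * x i)..(T (i+1)), Q t) = 0 := by
      rw [intervalIntegral.integral_congr (g := fun _ => (0:ℝ)) fun v hv => ?_]
      · simp
      · rw [Set.uIcc_of_le (hp23 i).le] at hv
        exact Qoff2 i v hv.1 hv.2
    rw [e1, e2, e3]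
    have c1 : (∫ t in (T i)..(T i + x i), (a-1) * (t - T i)) = (a-1) * (x i ^2 / 2) := by
      rw [intervalIntegral.integral_const_mul,
          intervalIntegral.integral_sub intervalIntegral.intervalIntegrable_id intervalIntegrable_const,
          integral_id, intervalIntegral.integral_const]
      simp only [smul_eq_mul]
      ring
    have c2 : (∫ t in (T i + x i)..(T i + a * x i), (T i + a * x i - t))
        = (a-1)^2 * (x i ^2 / 2) := by
      rw [intervalIntegral.integral_sub intervalIntegrable_const intervalIntegral.intervalIntegrable_id,
          integral_id, intervalIntegral.integral_const]
      simp only [smul_eq_mul]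
      ring
    rw [c1, c2]
    ring
  -- the integral over [0, T N]
  have Itot : ∀ N, (∫ t in (0:ℝ)..(T N), Q t)
      = ∑ i ∈ Finset.range N, a * (a-1) / 2 * x i ^ 2 := by
    intro N
    rw [← hT0, ← intervalIntegral.sum_integral_adjacent_intervals (fun k _ => IntQcyc k)]
    exact Finset.sum_congr rfl fun i _ => Icyc i
  -- the limit
  have hlim : Tendsto (fun N : ℕ => (lam * (a-1) / 2) *
      (((N:ℝ)⁻¹ * ∑ i ∈ Finset.range N, x i ^ 2) / ((N:ℝ)⁻¹ * ∑ i ∈ Finset.range N, x i)))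
      atTop (nhds ((lam * (a-1) / 2) * (m2 / mu))) :=
    (h2.div h1 hmu.ne').const_mul _
  have heq : ∀ᶠ N : ℕ in atTop, (lam * (a-1) / 2) *
      (((N:ℝ)⁻¹ * ∑ i ∈ Finset.range N, x i ^ 2) / ((N:ℝ)⁻¹ * ∑ i ∈ Finset.range N, x i))
      = (1 / T N) * ∫ t in (0:ℝ)..(T N), Q t := by
    filter_upwards [eventually_ge_atTop 1] with N hN
    rw [Itot N, hT N, ← Finset.mul_sum]
    have hN0 : (0:ℝ) < (N:ℝ) := by exact_mod_cast Nat.lt_of_lt_of_le Nat.zero_lt_one hN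
    have hs : 0 < ∑ i ∈ Finset.range N, x i :=
      Finset.sum_pos (fun i _ => hx i) (Finset.nonempty_range_iff.2 (by omega))
    have hl0' : lam ≠ 0 := hl0.ne'
    have hs' : (∑ i ∈ Finset.range N, x i) ≠ 0 := hs.ne'
    have ha0' : a ≠ 0 := ha0.ne'
    field_simp
  have hc : (lam * (a-1) / 2) * (m2 / mu) = lam * (a - 1) * m2 / (2 * mu) := by
    field_simp
  rw [← hc]
  exact Tendsto.congr' heq hlim
end Det



/-- if instead `E[X₁²] < ∞` (and `E[X₁] > 0`), then for the
reordered on/off process the time-averaged queue length over the cycle endpoints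
converges almost surely to `λ(a-1) E[X₁²] / (2 E[X₁])`, which is finite. -/
theorem stmt_7 {Ω : Type*} [MeasureSpace Ω] [IsProbabilityMeasure (ℙ : Measure Ω)]
    (a lam : ℝ) (ha : 1 < a) (hlam : lam ∈ Set.Ioo (0:ℝ) 1)
    (X : ℕ → Ω → ℝ) (hmeas : ∀ i, Measurable (X i))
    (hpos : ∀ i ω, 0 < X i ω)
    (hindep : iIndepFun X ℙ)
    (hident : ∀ i, IdentDistrib (X i) (X 0) ℙ ℙ)
    (hint : Integrable (X 0) ℙ)
    (hmean : 0 < ∫ ω, X 0 ω)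
    (hsq : Integrable (fun ω => (X 0 ω) ^ 2) ℙ)
    (T : Ω → ℕ → ℝ)
    (hT : ∀ ω N, T ω N = (a / lam) * ∑ i ∈ Finset.range N, X i ω)
    (A : Ω → ℝ → ℝ)
    (hAon : ∀ ω i, ∀ t, T ω i ≤ t → t < T ω i + X i ω → A ω t = a)
    (hAoff : ∀ ω i, ∀ t, T ω i + X i ω ≤ t → t < T ω (i + 1) → A ω t = 0)
    (Q : Ω → ℝ → ℝ)
    (hQ : ∀ ω t, Q ω t = ⨆ u : Set.Icc (0:ℝ) t, ∫ v in (u : ℝ)..t, (A ω v - 1)) :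
    ∀ᵐ ω ∂ℙ, Tendsto
      (fun N => (1 / T ω N) * ∫ t in (0:ℝ)..(T ω N), Q ω t)
      atTop (nhds (lam * (a - 1) * (∫ ω', (X 0 ω') ^ 2) / (2 * ∫ ω', X 0 ω'))) := by
  have hpair : Pairwise (Function.onFun (IndepFun · · ℙ) X) := fun i j hij => hindep.indepFun hij
  have hsll1 := ProbabilityTheory.strong_law_ae X hint hpair hident
  have hsq_meas : Measurable (fun y : ℝ => y ^ 2) := measurable_id.pow_const 2
  have hpair2 : Pairwise (Function.onFun (IndepFun · · ℙ) (fun i ω => X i ω ^ 2)) := by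
    intro i j hij
    exact (hindep.indepFun hij).comp hsq_meas hsq_meas
  have hident2 : ∀ i, IdentDistrib (fun ω => X i ω ^ 2) (fun ω => X 0 ω ^ 2) ℙ ℙ :=
    fun i => (hident i).comp hsq_meas
  have hsll2 := ProbabilityTheory.strong_law_ae (fun i ω => X i ω ^ 2) hsq hpair2 hident2
  filter_upwards [hsll1, hsll2] with ω hw1 hw2
  refine stmt7_det ha hlam.1 hlam.2 (fun i => hpos i ω) (hT ω) (hAon ω) (hAoff ω) (hQ ω)
    hmean ?_ ?_
  · simpa [smul_eq_mul] using hw1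
  · simpa [smul_eq_mul] using hw2
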